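/- arXiv:2404.16204 — 5 statements merged into one kernel-verified Lean document; each statement's English description precedes it below -/
import Mathlib

section
/- (Role delegation type II, case 1, graph level.) Let P1 and P2 be disjoint sets of vertices with c1 ∈ P1 and c2 ∈ P2, let S = S(P1, P2, c1, c2) be the binary star graph, let w ∈ P2 \ {c2}, and let v ∈ P1 \ {c1}. Let G' = S − (P2 \ {c2, w}) be obtained by deleting all vertices of P2 other than c2 and w, and let S'' = τ_{c1}(G') − c1. Then τ_v(τ_{c2}(τ_v(S'')) − c2) is the star graph on (P1 \ {c1}) ∪ {w} with center v. -/
open SimpleGraph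

universe u

/-- Local complementation of `G` at vertex `i`: adjacency is toggled exactly among
pairs of neighbors of `i`. -/
def localComp {V : Type u} (G : SimpleGraph V) (i : V) : SimpleGraph V where
  Adj a b := a ≠ b ∧
    ((G.Adj i a ∧ G.Adj i b) ∧ ¬ G.Adj a b ∨ ¬(G.Adj i a ∧ G.Adj i b) ∧ G.Adj a b)
  symm := by
    constructor
    rintro a b ⟨hne, h⟩
    refine ⟨hne.symm, ?_⟩
    rcases h with ⟨⟨ha, hb⟩, hab⟩ | ⟨h1, h2⟩
    · exact Or.inl ⟨⟨hb, ha⟩, fun h => hab h.symm⟩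
    · exact Or.inr ⟨fun h => h1 ⟨h.2, h.1⟩, h2.symm⟩
  loopless := ⟨fun a h => h.1 rfl⟩

/-- Vertex deletion `G − i`: remove every edge incident to `i` (the vertex stays,
isolated). -/
def delVert {V : Type u} (G : SimpleGraph V) (i : V) : SimpleGraph V where
  Adj a b := G.Adj a b ∧ a ≠ i ∧ b ≠ i
  symm := ⟨fun _ _ ⟨h, ha, hb⟩ => ⟨h.symm, hb, ha⟩⟩
  loopless := ⟨fun a h => G.irrefl h.1⟩

/-- Deletion of a set `Z` of vertices: remove every edge incident to a vertex of `Z`. -/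
def delSet {V : Type u} (G : SimpleGraph V) (Z : Set V) : SimpleGraph V where
  Adj a b := G.Adj a b ∧ a ∉ Z ∧ b ∉ Z
  symm := ⟨fun _ _ ⟨h, ha, hb⟩ => ⟨h.symm, hb, ha⟩⟩
  loopless := ⟨fun a h => G.irrefl h.1⟩

/-- Star graph on the set `W` with center `c`: edges are exactly the pairs `{c, u}`
for `u ∈ W \ {c}`. -/
def starGraph {V : Type u} (W : Set V) (c : V) : SimpleGraph V :=
  SimpleGraph.fromRel (fun a b => a = c ∧ b ∈ W \ {c})

/-- Complete graph on the set `A`: edges are exactly all pairs of distinct elements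
of `A`. -/
def completeOn {V : Type u} (A : Set V) : SimpleGraph V :=
  SimpleGraph.fromRel (fun a b => a ∈ A ∧ b ∈ A)

/-- Complete bipartite graph on parts `A` and `B`: edges are exactly the pairs
`{a, b}` with `a ∈ A` and `b ∈ B`. -/
def completeBipartiteOn {V : Type u} (A B : Set V) : SimpleGraph V :=
  SimpleGraph.fromRel (fun a b => a ∈ A ∧ b ∈ B)

/-- Binary star graph `S(P1, P2, c1, c2)`: edges are exactly the pairs `{c1, u}`
with `u ∈ P2` together with the pairs `{u, c2}` with `u ∈ P1`. -/
def binaryStar {V : Type u} (P1 P2 : Set V) (c1 c2 : V) : SimpleGraph V :=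
  SimpleGraph.fromRel (fun a b => (a = c1 ∧ b ∈ P2) ∨ (a ∈ P1 ∧ b = c2))

/-- The graph with the single edge `{c1, c2}`. -/
def singleEdge {V : Type u} (c1 c2 : V) : SimpleGraph V :=
  SimpleGraph.fromRel (fun a b => a = c1 ∧ b = c2)

/-- Role delegation type II, case 1, graph level. -/
theorem stmt_11 {V : Type u} (P1 P2 : Set V) (hdisj : Disjoint P1 P2)
    (c1 c2 : V) (hc1 : c1 ∈ P1) (hc2 : c2 ∈ P2)
    (w : V) (hw : w ∈ P2 \ {c2}) (v : V) (hv : v ∈ P1 \ {c1}) :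
    localComp (delVert (localComp (localComp
        (delVert (localComp
          (delSet (binaryStar P1 P2 c1 c2) (P2 \ {c2, w})) c1) c1) v) c2) c2) v =
      starGraph ((P1 \ {c1}) ∪ {w}) v := by
  obtain ⟨hwP2, hwc2'⟩ := hw
  obtain ⟨hvP1, hvc1'⟩ := hv
  have hwc2 : w ≠ c2 := hwc2'
  have hvc1 : v ≠ c1 := hvc1'
  have hc1P2 : c1 ∉ P2 := Set.disjoint_left.mp hdisj hc1
  have hc2P1 : c2 ∉ P1 := Set.disjoint_right.mp hdisj hc2
  have hwP1 : w ∉ P1 := Set.disjoint_right.mp hdisj hwP2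
  have hvP2 : v ∉ P2 := Set.disjoint_left.mp hdisj hvP1
  have hvc2 : v ≠ c2 := fun h => hvP2 (h ▸ hc2)
  have hvw : v ≠ w := fun h => hvP2 (h ▸ hwP2)
  have hc1c2 : c1 ≠ c2 := fun h => hc1P2 (h ▸ hc2)
  have hwc1 : w ≠ c1 := fun h => hwP1 (h ▸ hc1)
  -- Step 1: delete P2 \ {c2, w}
  have e1 : delSet (binaryStar P1 P2 c1 c2) (P2 \ {c2, w}) =
      SimpleGraph.fromRel (fun a b => (a = c1 ∧ (b = c2 ∨ b = w)) ∨ (a ∈ P1 ∧ b = c2)) := by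
    ext a b
    constructor
    · rintro ⟨⟨hne, h⟩, ha, hb⟩
      refine ⟨hne, ?_⟩
      have key : ∀ x, x ∉ P2 \ ({c2, w} : Set V) → x ∈ P2 → x = c2 ∨ x = w := by
        intro x hx hxP2
        by_cases h2 : x = c2 ∨ x = w
        · exact h2
        · exact absurd ⟨hxP2, fun hmem => h2 hmem⟩ hx
      rcases h with (⟨rfl, h2⟩ | h2) | (⟨rfl, h2⟩ | h2)
      · exact Or.inl (Or.inl ⟨rfl, key b hb h2⟩)
      · exact Or.inl (Or.inr h2)
      · exact Or.inr (Or.inl ⟨rfl, key a ha h2⟩)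
      · exact Or.inr (Or.inr h2)
    · rintro ⟨hne, h⟩
      have mem2 : ∀ x : V, (x = c2 ∨ x = w) → x ∈ P2 := by
        rintro x (rfl | rfl); exacts [hc2, hwP2]
      have notdel1 : ∀ x : V, x ∈ P1 → x ∉ P2 \ ({c2, w} : Set V) := by
        rintro x hx ⟨h1, _⟩; exact Set.disjoint_left.mp hdisj hx h1
      have notdel2 : ∀ x : V, (x = c2 ∨ x = w) → x ∉ P2 \ ({c2, w} : Set V) := by
        rintro x hx ⟨_, h2⟩; exact h2 hx
      rcases h with (⟨rfl, h2⟩ | ⟨h2, rfl⟩) | (⟨rfl, h2⟩ | ⟨h2, rfl⟩)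
      · exact ⟨⟨hne, Or.inl (Or.inl ⟨rfl, mem2 b h2⟩)⟩, notdel1 a hc1, notdel2 b h2⟩
      · exact ⟨⟨hne, Or.inl (Or.inr ⟨h2, rfl⟩)⟩, notdel1 a h2, notdel2 b (Or.inl rfl)⟩
      · exact ⟨⟨hne, Or.inr (Or.inl ⟨rfl, mem2 a h2⟩)⟩, notdel2 a h2, notdel1 b hc1⟩
      · exact ⟨⟨hne, Or.inr (Or.inr ⟨h2, rfl⟩)⟩, notdel2 a (Or.inl rfl), notdel1 b h2⟩
  rw [e1]
  -- Step 2: local complementation at c1 (adds the edge {w, c2})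
  have nb : ∀ x, (SimpleGraph.fromRel (fun a b =>
      (a = c1 ∧ (b = c2 ∨ b = w)) ∨ (a ∈ P1 ∧ b = c2))).Adj c1 x ↔ (x = c2 ∨ x = w) := by
    intro x
    constructor
    · rintro ⟨hne, (⟨_, h⟩ | ⟨_, rfl⟩) | (⟨rfl, h⟩ | ⟨_, h⟩)⟩
      · exact h
      · exact Or.inl rfl
      · rcases h with h | h
        · exact absurd h hc1c2
        · exact absurd h.symm hwc1
      · exact absurd h hc1c2
    · rintro (rfl | rfl)
      · exact ⟨hc1c2, Or.inl (Or.inl ⟨rfl, Or.inl rfl⟩)⟩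
      · exact ⟨fun h => hwc1 h.symm, Or.inl (Or.inl ⟨rfl, Or.inr rfl⟩)⟩
  have e2 : localComp (SimpleGraph.fromRel
        (fun a b => (a = c1 ∧ (b = c2 ∨ b = w)) ∨ (a ∈ P1 ∧ b = c2))) c1 =
      SimpleGraph.fromRel (fun a b =>
        (a = c1 ∧ (b = c2 ∨ b = w)) ∨ (a ∈ P1 ∧ b = c2) ∨ (a = w ∧ b = c2)) := by
    ext a b
    constructor
    · rintro ⟨hne, h⟩
      refine ⟨hne, ?_⟩
      rcases h with ⟨⟨hia, hib⟩, _⟩ | ⟨_, hadj⟩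
      · rcases (nb a).mp hia with rfl | rfl <;> rcases (nb b).mp hib with h2 | h2
        · exact absurd (h2.symm) hne
        · exact Or.inr (Or.inr (Or.inr ⟨h2, rfl⟩))
        · exact Or.inl (Or.inr (Or.inr ⟨rfl, h2⟩))
        · exact absurd (h2.symm) hne
      · obtain ⟨_, h⟩ := hadj
        rcases h with (h | h) | (h | h)
        exacts [Or.inl (Or.inl h), Or.inl (Or.inr (Or.inl h)),
          Or.inr (Or.inl h), Or.inr (Or.inr (Or.inl h))]
    · rintro ⟨hne, h⟩
      refine ⟨hne, ?_⟩
      rcases h with (⟨rfl, hb⟩ | ⟨haP1, rfl⟩ | ⟨rfl, rfl⟩) | (⟨rfl, ha⟩ | ⟨hbP1, rfl⟩ | ⟨rfl, rfl⟩)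
      · refine Or.inr ⟨?_, hne, Or.inl (Or.inl ⟨rfl, hb⟩)⟩
        rintro ⟨hia, _⟩
        rcases (nb _).mp hia with h2 | h2
        · exact hc1c2 h2
        · exact hwc1 h2.symm
      · refine Or.inr ⟨?_, hne, Or.inl (Or.inr ⟨haP1, rfl⟩)⟩
        rintro ⟨hia, _⟩
        rcases (nb _).mp hia with rfl | rfl
        · exact hc2P1 haP1
        · exact hwP1 haP1
      · refine Or.inl ⟨⟨(nb _).mpr (Or.inr rfl), (nb _).mpr (Or.inl rfl)⟩, ?_⟩
        rintro ⟨_, (h | h) | (h | h)⟩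
        · exact hwc1 h.1
        · exact hwP1 h.1
        · exact hc1c2 h.1.symm
        · exact hc2P1 h.1
      · refine Or.inr ⟨?_, hne, Or.inr (Or.inl ⟨rfl, ha⟩)⟩
        rintro ⟨_, hib⟩
        rcases (nb _).mp hib with h2 | h2
        · exact hc1c2 h2
        · exact hwc1 h2.symm
      · refine Or.inr ⟨?_, hne, Or.inr (Or.inr ⟨hbP1, rfl⟩)⟩
        rintro ⟨_, hib⟩
        rcases (nb _).mp hib with rfl | rfl
        · exact hc2P1 hbP1
        · exact hwP1 hbP1
      · refine Or.inl ⟨⟨(nb _).mpr (Or.inl rfl), (nb _).mpr (Or.inr rfl)⟩, ?_⟩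
        rintro ⟨_, (h | h) | (h | h)⟩
        · exact hc1c2 h.1.symm
        · exact hc2P1 h.1
        · exact hwc1 h.1
        · exact hwP1 h.1
  rw [e2]
  -- Step 3: delete c1, obtaining the star at c2 on (P1 \ {c1}) ∪ {w}
  have e3 : delVert (SimpleGraph.fromRel (fun a b =>
        (a = c1 ∧ (b = c2 ∨ b = w)) ∨ (a ∈ P1 ∧ b = c2) ∨ (a = w ∧ b = c2))) c1 =
      SimpleGraph.fromRel (fun a b => ((a ∈ P1 ∧ a ≠ c1) ∨ a = w) ∧ b = c2) := by
    ext a b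
    constructor
    · rintro ⟨⟨hne, h⟩, ha, hb⟩
      refine ⟨hne, ?_⟩
      rcases h with (⟨h1, _⟩ | ⟨h1, rfl⟩ | ⟨rfl, rfl⟩) | (⟨h1, _⟩ | ⟨h1, rfl⟩ | ⟨rfl, rfl⟩)
      · exact absurd h1 ha
      · exact Or.inl ⟨Or.inl ⟨h1, ha⟩, rfl⟩
      · exact Or.inl ⟨Or.inr rfl, rfl⟩
      · exact absurd h1 hb
      · exact Or.inr ⟨Or.inl ⟨h1, hb⟩, rfl⟩
      · exact Or.inr ⟨Or.inr rfl, rfl⟩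
    · rintro ⟨hne, h⟩
      rcases h with ⟨ha1, rfl⟩ | ⟨hb1, rfl⟩
      · rcases ha1 with ⟨h1, h2⟩ | rfl
        · exact ⟨⟨hne, Or.inl (Or.inr (Or.inl ⟨h1, rfl⟩))⟩, h2, fun hh => hc1c2 hh.symm⟩
        · exact ⟨⟨hne, Or.inl (Or.inr (Or.inr ⟨rfl, rfl⟩))⟩, hwc1, fun hh => hc1c2 hh.symm⟩
      · rcases hb1 with ⟨h1, h2⟩ | rfl
        · exact ⟨⟨hne, Or.inr (Or.inr (Or.inl ⟨h1, rfl⟩))⟩, fun hh => hc1c2 hh.symm, h2⟩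
        · exact ⟨⟨hne, Or.inr (Or.inr (Or.inr ⟨rfl, rfl⟩))⟩, fun hh => hc1c2 hh.symm, hwc1⟩
  rw [e3]
  -- Step 4: local complementation at v is the identity here
  have nbv : ∀ x, (SimpleGraph.fromRel (fun a b =>
      ((a ∈ P1 ∧ a ≠ c1) ∨ a = w) ∧ b = c2)).Adj v x ↔ x = c2 := by
    intro x
    constructor
    · rintro ⟨hne, ⟨_, rfl⟩ | ⟨hx, h⟩⟩
      · rfl
      · exact absurd h hvc2
    · rintro rfl
      exact ⟨hvc2, Or.inl ⟨Or.inl ⟨hvP1, hvc1⟩, rfl⟩⟩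
  have e4 : localComp (SimpleGraph.fromRel
        (fun a b => ((a ∈ P1 ∧ a ≠ c1) ∨ a = w) ∧ b = c2)) v =
      SimpleGraph.fromRel (fun a b => ((a ∈ P1 ∧ a ≠ c1) ∨ a = w) ∧ b = c2) := by
    ext a b
    constructor
    · rintro ⟨hne, h⟩
      rcases h with ⟨⟨hia, hib⟩, _⟩ | ⟨_, hadj⟩
      · exact absurd (((nbv a).mp hia).trans ((nbv b).mp hib).symm) hne
      · exact hadj
    · intro hadj
      refine ⟨hadj.1, Or.inr ⟨?_, hadj⟩⟩
      rintro ⟨hia, hib⟩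
      exact hadj.1 (((nbv a).mp hia).trans ((nbv b).mp hib).symm)
  rw [e4]
  -- Step 5: local complementation at c2 adds the complete graph on A
  have nbc2 : ∀ x, (SimpleGraph.fromRel (fun a b =>
      ((a ∈ P1 ∧ a ≠ c1) ∨ a = w) ∧ b = c2)).Adj c2 x ↔ ((x ∈ P1 ∧ x ≠ c1) ∨ x = w) := by
    intro x
    constructor
    · rintro ⟨hne, ⟨hx, h⟩ | ⟨hx, _⟩⟩
      · rcases hx with ⟨h1, _⟩ | rfl
        · exact absurd h1 hc2P1
        · exact absurd rfl hwc2
      · exact hx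
    · intro hx
      have hne : c2 ≠ x := by
        rintro rfl
        rcases hx with ⟨h1, _⟩ | h1
        · exact hc2P1 h1
        · exact hwc2 h1.symm
      exact ⟨hne, Or.inr ⟨hx, rfl⟩⟩
  have hAne : ∀ x, ((x ∈ P1 ∧ x ≠ c1) ∨ x = w) → x ≠ c2 := by
    rintro x h rfl
    rcases h with ⟨h1, _⟩ | h1
    · exact hc2P1 h1
    · exact hwc2 h1.symm
  have e5 : localComp (SimpleGraph.fromRel
        (fun a b => ((a ∈ P1 ∧ a ≠ c1) ∨ a = w) ∧ b = c2)) c2 =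
      SimpleGraph.fromRel (fun a b =>
        (((a ∈ P1 ∧ a ≠ c1) ∨ a = w) ∧ b = c2) ∨
        (((a ∈ P1 ∧ a ≠ c1) ∨ a = w) ∧ ((b ∈ P1 ∧ b ≠ c1) ∨ b = w))) := by
    ext a b
    constructor
    · rintro ⟨hne, h⟩
      refine ⟨hne, ?_⟩
      rcases h with ⟨⟨hia, hib⟩, _⟩ | ⟨_, _, hadj⟩
      · exact Or.inl (Or.inr ⟨(nbc2 a).mp hia, (nbc2 b).mp hib⟩)
      · rcases hadj with h | h
        · exact Or.inl (Or.inl h)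
        · exact Or.inr (Or.inl h)
    · rintro ⟨hne, h⟩
      refine ⟨hne, ?_⟩
      rcases h with (⟨hA, rfl⟩ | ⟨hAa, hAb⟩) | (⟨hA, rfl⟩ | ⟨hAb, hAa⟩)
      · exact Or.inr ⟨fun hh => hAne b ((nbc2 b).mp hh.2) rfl, hne, Or.inl ⟨hA, rfl⟩⟩
      · refine Or.inl ⟨⟨(nbc2 a).mpr hAa, (nbc2 b).mpr hAb⟩, ?_⟩
        rintro ⟨_, ⟨_, h2⟩ | ⟨_, h2⟩⟩
        · exact hAne b hAb h2
        · exact hAne a hAa h2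
      · exact Or.inr ⟨fun hh => hAne a ((nbc2 a).mp hh.1) rfl, hne, Or.inr ⟨hA, rfl⟩⟩
      · refine Or.inl ⟨⟨(nbc2 a).mpr hAa, (nbc2 b).mpr hAb⟩, ?_⟩
        rintro ⟨_, ⟨_, h2⟩ | ⟨_, h2⟩⟩
        · exact hAne b hAb h2
        · exact hAne a hAa h2
  rw [e5]
  -- Step 6: delete c2, obtaining the complete graph on A
  have e6 : delVert (SimpleGraph.fromRel (fun a b =>
        (((a ∈ P1 ∧ a ≠ c1) ∨ a = w) ∧ b = c2) ∨
        (((a ∈ P1 ∧ a ≠ c1) ∨ a = w) ∧ ((b ∈ P1 ∧ b ≠ c1) ∨ b = w)))) c2 =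
      SimpleGraph.fromRel (fun a b =>
        ((a ∈ P1 ∧ a ≠ c1) ∨ a = w) ∧ ((b ∈ P1 ∧ b ≠ c1) ∨ b = w)) := by
    ext a b
    constructor
    · rintro ⟨⟨hne, h⟩, ha, hb⟩
      refine ⟨hne, ?_⟩
      rcases h with (⟨_, h2⟩ | h2) | (⟨_, h2⟩ | h2)
      · exact absurd h2 hb
      · exact Or.inl h2
      · exact absurd h2 ha
      · exact Or.inr h2
    · rintro ⟨hne, h⟩
      rcases h with ⟨hAa, hAb⟩ | ⟨hAb, hAa⟩
      · exact ⟨⟨hne, Or.inl (Or.inr ⟨hAa, hAb⟩)⟩, hAne a hAa, hAne b hAb⟩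
      · exact ⟨⟨hne, Or.inr (Or.inr ⟨hAb, hAa⟩)⟩, hAne a hAa, hAne b hAb⟩
  rw [e6]
  -- Step 7: local complementation at v gives the star at v
  have hAv : (v ∈ P1 ∧ v ≠ c1) ∨ v = w := Or.inl ⟨hvP1, hvc1⟩
  have nbv2 : ∀ x, (SimpleGraph.fromRel (fun a b =>
      ((a ∈ P1 ∧ a ≠ c1) ∨ a = w) ∧ ((b ∈ P1 ∧ b ≠ c1) ∨ b = w))).Adj v x ↔
      (v ≠ x ∧ ((x ∈ P1 ∧ x ≠ c1) ∨ x = w)) := by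
    intro x
    constructor
    · rintro ⟨hne, ⟨_, h⟩ | ⟨h, _⟩⟩ <;> exact ⟨hne, h⟩
    · rintro ⟨hne, h⟩
      exact ⟨hne, Or.inl ⟨hAv, h⟩⟩
  have memW : ∀ x, ((x ∈ P1 ∧ x ≠ c1) ∨ x = w) → x ∈ (P1 \ {c1}) ∪ {w} := by
    rintro x (⟨h1, h2⟩ | rfl)
    · exact Or.inl ⟨h1, h2⟩
    · exact Or.inr rfl
  have memW' : ∀ x, x ∈ (P1 \ {c1}) ∪ {w} → ((x ∈ P1 ∧ x ≠ c1) ∨ x = w) := by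
    rintro x (⟨h1, h2⟩ | rfl)
    · exact Or.inl ⟨h1, h2⟩
    · exact Or.inr rfl
  ext a b
  constructor
  · rintro ⟨hne, h⟩
    refine ⟨hne, ?_⟩
    rcases h with ⟨⟨hia, hib⟩, hn⟩ | ⟨hn, _, hadj⟩
    · obtain ⟨hva, hAa⟩ := (nbv2 a).mp hia
      obtain ⟨hvb, hAb⟩ := (nbv2 b).mp hib
      exact absurd ⟨hne, Or.inl ⟨hAa, hAb⟩⟩ hn
    · have hAa : (a ∈ P1 ∧ a ≠ c1) ∨ a = w := by
        rcases hadj with ⟨h1, _⟩ | ⟨_, h1⟩ <;> exact h1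
      have hAb : (b ∈ P1 ∧ b ≠ c1) ∨ b = w := by
        rcases hadj with ⟨_, h1⟩ | ⟨h1, _⟩ <;> exact h1
      by_cases hav : v = a
      · exact Or.inl ⟨hav.symm, ⟨memW b hAb, fun hh => hne (hav.symm.trans hh.symm)⟩⟩
      · by_cases hbv : v = b
        · exact Or.inr ⟨hbv.symm, ⟨memW a hAa, fun hh => hne (hh.trans hbv)⟩⟩
        · exact absurd ⟨(nbv2 a).mpr ⟨hav, hAa⟩, (nbv2 b).mpr ⟨hbv, hAb⟩⟩ hn
  · rintro ⟨hne, h⟩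
    refine ⟨hne, Or.inr ⟨?_, hne, ?_⟩⟩
    · rintro ⟨hia, hib⟩
      obtain ⟨hva, _⟩ := (nbv2 a).mp hia
      obtain ⟨hvb, _⟩ := (nbv2 b).mp hib
      rcases h with ⟨h1, _⟩ | ⟨h1, _⟩
      · exact hva h1.symm
      · exact hvb h1.symm
    · rcases h with ⟨rfl, hbW, _⟩ | ⟨rfl, haW, _⟩
      · exact Or.inl ⟨hAv, memW' b hbW⟩
      · exact Or.inr ⟨hAv, memW' a haW⟩
end

section
/- (Role delegation type II, case 2, graph level.) Let P1 and P2 be disjoint sets of vertices with c1 ∈ P1 and c2 ∈ P2, let S = S(P1, P2, c1, c2) be the binary star graph, and let w ∈ P2 \ {c2}. Let G' = S − (P2 \ {c2, w}) be obtained by deleting all vertices of P2 other than c2 and w, and let S'' = τ_{c1}(G') − c1. Then τ_w(τ_{c2}(τ_w(S'')) − c2) is the star graph on (P1 \ {c1}) ∪ {w} with center w. -/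
open SimpleGraph

universe u

lemma star_leaf_localComp {V : Type u} (W : Set V) (c x : V) (hxc : x ≠ c) :
    localComp (starGraph W c) x = starGraph W c := by
  ext a b
  by_cases hac : a = c <;> by_cases hbc : b = c <;>
    by_cases hax : a = x <;> by_cases hbx : b = x <;>
    simp_all [localComp, _root_.starGraph] <;> tauto

lemma star_center_localComp {V : Type u} (W : Set V) (c : V) (hc : c ∈ W) :
    localComp (starGraph W c) c = completeOn W := by
  ext a b
  by_cases hac : a = c <;> by_cases hbc : b = c <;> by_cases hab : a = b <;>
    simp_all [localComp, _root_.starGraph, completeOn] <;> tauto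

lemma complete_delVert {V : Type u} (W : Set V) (c : V) :
    delVert (completeOn W) c = completeOn (W \ {c}) := by
  ext a b
  simp only [delVert, completeOn, SimpleGraph.fromRel_adj, Set.mem_diff,
    Set.mem_singleton_iff, ne_eq]
  tauto

lemma complete_localComp {V : Type u} (W : Set V) (x : V) (hx : x ∈ W) :
    localComp (completeOn W) x = starGraph W x := by
  ext a b
  by_cases hax : a = x <;> by_cases hbx : b = x <;> by_cases hab : a = b <;>
    simp_all [localComp, _root_.starGraph, completeOn] <;> tauto

set_option maxHeartbeats 1000000 in
/-- Role delegation type II, case 2, graph level: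
with `G' = S − (P2 \ {c2, w})` and `S'' = τ_{c1}(G') − c1`,
`τ_w(τ_{c2}(τ_w(S'')) − c2)` is the star graph on `(P1 \ {c1}) ∪ {w}` with center `w`. -/
theorem stmt_12 {V : Type u} (P1 P2 : Set V) (hdisj : Disjoint P1 P2)
    (c1 c2 : V) (hc1 : c1 ∈ P1) (hc2 : c2 ∈ P2) (w : V) (hw : w ∈ P2 \ {c2}) :
    localComp (delVert (localComp (localComp
        (delVert (localComp
          (delSet (binaryStar P1 P2 c1 c2) (P2 \ {c2, w})) c1) c1) w) c2) c2) w =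
      starGraph ((P1 \ {c1}) ∪ {w}) w := by
  obtain ⟨hwP2, hwc2'⟩ := hw
  have hwc2 : w ≠ c2 := hwc2'
  have key : ∀ x, x ∈ P1 → (x ∈ P2) = False :=
    fun x hx => eq_false (fun h => hdisj.le_bot ⟨hx, h⟩)
  have hwP1 : w ∉ P1 := fun h => (key w h ▸ hwP2)
  have hc2P1 : c2 ∉ P1 := fun h => (key c2 h ▸ hc2)
  have hc1P2 : c1 ∉ P2 := fun h => (key c1 hc1 ▸ h)
  have hc1c2 : c1 ≠ c2 := fun h => hc1P2 (h ▸ hc2)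
  have hc1w : c1 ≠ w := fun h => hc1P2 (h ▸ hwP2)
  have stepA : delSet (binaryStar P1 P2 c1 c2) (P2 \ {c2, w}) =
      binaryStar P1 {c2, w} c1 c2 := by
    ext a b
    by_cases ha1 : a = c1 <;> by_cases hb1 : b = c1 <;>
      by_cases ha2 : a = c2 <;> by_cases hb2 : b = c2 <;>
      by_cases haw : a = w <;> by_cases hbw : b = w <;>
      simp_all [delSet, binaryStar, key] <;> tauto
  have stepB : delVert (localComp (binaryStar P1 {c2, w} c1 c2) c1) c1 =
      starGraph ((P1 \ {c1}) ∪ {w} ∪ {c2}) c2 := by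
    ext a b
    by_cases ha1 : a = c1 <;> by_cases hb1 : b = c1 <;>
      by_cases ha2 : a = c2 <;> by_cases hb2 : b = c2 <;>
      by_cases haw : a = w <;> by_cases hbw : b = w <;>
      simp_all [delVert, localComp, binaryStar, _root_.starGraph, key] <;> tauto
  rw [stepA, stepB, star_leaf_localComp _ _ _ hwc2,
    star_center_localComp ((P1 \ {c1}) ∪ {w} ∪ {c2}) c2 (Or.inr rfl),
    complete_delVert]
  have hWset : ((P1 \ {c1}) ∪ {w} ∪ {c2}) \ {c2} = (P1 \ {c1}) ∪ {w} := by
    ext x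
    simp only [Set.mem_diff, Set.mem_union, Set.mem_singleton_iff]
    constructor
    · rintro ⟨h | h, hx⟩
      · exact h
      · exact absurd h hx
    · rintro (⟨hx, hxc1⟩ | hx)
      · exact ⟨Or.inl (Or.inl ⟨hx, hxc1⟩), fun h => hc2P1 (h ▸ hx)⟩
      · have hxw : x = w := hx
        exact ⟨Or.inl (Or.inr hx), fun h => hwc2 ((hxw ▸ h : w = c2))⟩
  rw [hWset]
  exact complete_localComp _ _ (Or.inr rfl)
end

section
/- Let P1 and P2 be disjoint sets of vertices with c1 ∈ P1 and c2 ∈ P2, and let S = S(P1, P2, c1, c2) be the binary star graph. Then τ_{c1}(τ_{c2}(S)) − c1 is the simple graph whose edges are exactly: all pairs of distinct vertices both lying in P2, together with all pairs {u, z} with u ∈ P1 \ {c1} and z ∈ P2 \ {c2}. -/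
open SimpleGraph

universe u

set_option maxHeartbeats 4000000 in
/-- `τ_{c1}(τ_{c2}(S)) − c1` is the simple graph whose edges are
exactly: all pairs of distinct vertices both lying in `P2`, together with all pairs
`{u, z}` with `u ∈ P1 \ {c1}` and `z ∈ P2 \ {c2}`. -/
theorem stmt_14 {V : Type u} (P1 P2 : Set V) (hdisj : Disjoint P1 P2)
    (c1 c2 : V) (hc1 : c1 ∈ P1) (hc2 : c2 ∈ P2) :
    delVert (localComp (localComp (binaryStar P1 P2 c1 c2) c2) c1) c1 =
      SimpleGraph.fromRel (fun a b =>
        (a ∈ P2 ∧ b ∈ P2) ∨ (a ∈ P1 \ {c1} ∧ b ∈ P2 \ {c2})) := by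
  have hd : ∀ x, x ∈ P1 → x ∈ P2 → False := fun x h1 h2 =>
    Set.disjoint_left.mp hdisj h1 h2
  have hne : c1 ≠ c2 := fun h => hd c1 hc1 (h ▸ hc2)
  have hc1n : c1 ∉ P2 := fun h => hd c1 hc1 h
  have hc2n : c2 ∉ P1 := fun h => hd c2 h hc2
  ext a b
  simp only [delVert, localComp, binaryStar, SimpleGraph.fromRel_adj, Set.mem_diff,
    Set.mem_singleton_iff]
  have hda := hd a
  have hdb := hd b
  rcases eq_or_ne a c1 with hac1 | hac1 <;>
  rcases eq_or_ne b c1 with hbc1 | hbc1 <;>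
  rcases eq_or_ne a c2 with hac2 | hac2 <;>
  rcases eq_or_ne b c2 with hbc2 | hbc2 <;>
  by_cases ha1 : a ∈ P1 <;> by_cases ha2 : a ∈ P2 <;>
  by_cases hb1 : b ∈ P1 <;> by_cases hb2 : b ∈ P2 <;>
  simp_all <;> tauto
end

section
/- (Extranet, graph level.) Let P1 and P2 be disjoint sets of vertices with c1 ∈ P1 and c2 ∈ P2, and let S = S(P1, P2, c1, c2) be the binary star graph. Then (τ_{c2}(τ_{c1}(τ_{c2}(S)) − c1)) − c2 is the complete bipartite graph on (P1 \ {c1}, P2 \ {c2}). -/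
open SimpleGraph

universe u

lemma stepA {V : Type u} (P1 P2 : Set V) (hdisj : Disjoint P1 P2)
    (c1 c2 : V) (hc1 : c1 ∈ P1) (hc2 : c2 ∈ P2) :
    localComp (binaryStar P1 P2 c1 c2) c2 =
      binaryStar P1 P2 c1 c2 ⊔ completeOn P1 := by
  have h12 : c1 ≠ c2 := fun h => (hdisj.ne_of_mem hc1 hc2) h
  have hc1n : c1 ∉ P2 := fun h => hdisj.ne_of_mem hc1 h rfl
  have hc2n : c2 ∉ P1 := fun h => hdisj.ne_of_mem h hc2 rfl
  ext a b
  have haP : a ∈ P1 → a ∉ P2 := fun h1 h2 => hdisj.ne_of_mem h1 h2 rfl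
  have hbP : b ∈ P1 → b ∉ P2 := fun h1 h2 => hdisj.ne_of_mem h1 h2 rfl
  simp only [localComp, binaryStar, completeOn, SimpleGraph.sup_adj,
    SimpleGraph.fromRel_adj]
  by_cases hac1 : a = c1 <;> by_cases hac2 : a = c2 <;>
  by_cases hbc1 : b = c1 <;> by_cases hbc2 : b = c2 <;>
  subst_vars <;> clear hdisj <;> aesop (config := { maxRuleApplications := 400, warnOnNonterminal := false }) <;> tauto

set_option maxHeartbeats 1000000 in
lemma stepB {V : Type u} (P1 P2 : Set V) (hdisj : Disjoint P1 P2)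
    (c1 c2 : V) (hc1 : c1 ∈ P1) (hc2 : c2 ∈ P2) :
    delVert (localComp (binaryStar P1 P2 c1 c2 ⊔ completeOn P1) c1) c1 =
      completeOn P2 ⊔ completeBipartiteOn (P1 \ {c1}) (P2 \ {c2}) := by
  have h12 : c1 ≠ c2 := fun h => (hdisj.ne_of_mem hc1 hc2) h
  have hc1n : c1 ∉ P2 := fun h => hdisj.ne_of_mem hc1 h rfl
  have hc2n : c2 ∉ P1 := fun h => hdisj.ne_of_mem h hc2 rfl
  ext a b
  have haP : a ∈ P1 → a ∉ P2 := fun h1 h2 => hdisj.ne_of_mem h1 h2 rfl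
  have hbP : b ∈ P1 → b ∉ P2 := fun h1 h2 => hdisj.ne_of_mem h1 h2 rfl
  simp only [delVert, localComp, binaryStar, completeOn, completeBipartiteOn,
    SimpleGraph.sup_adj, SimpleGraph.fromRel_adj, Set.mem_diff,
    Set.mem_singleton_iff]
  by_cases hac1 : a = c1 <;> by_cases hac2 : a = c2 <;>
  by_cases hbc1 : b = c1 <;> by_cases hbc2 : b = c2 <;>
  subst_vars <;> clear hdisj <;> aesop (config := { maxRuleApplications := 400, warnOnNonterminal := false }) <;> tauto

set_option maxHeartbeats 1000000 in
lemma stepC {V : Type u} (P1 P2 : Set V) (hdisj : Disjoint P1 P2)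
    (c1 c2 : V) (hc1 : c1 ∈ P1) (hc2 : c2 ∈ P2) :
    delVert (localComp
        (completeOn P2 ⊔ completeBipartiteOn (P1 \ {c1}) (P2 \ {c2})) c2) c2 =
      completeBipartiteOn (P1 \ {c1}) (P2 \ {c2}) := by
  have h12 : c1 ≠ c2 := fun h => (hdisj.ne_of_mem hc1 hc2) h
  have hc1n : c1 ∉ P2 := fun h => hdisj.ne_of_mem hc1 h rfl
  have hc2n : c2 ∉ P1 := fun h => hdisj.ne_of_mem h hc2 rfl
  ext a b
  have haP : a ∈ P1 → a ∉ P2 := fun h1 h2 => hdisj.ne_of_mem h1 h2 rfl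
  have hbP : b ∈ P1 → b ∉ P2 := fun h1 h2 => hdisj.ne_of_mem h1 h2 rfl
  simp only [delVert, localComp, completeOn, completeBipartiteOn,
    SimpleGraph.sup_adj, SimpleGraph.fromRel_adj, Set.mem_diff,
    Set.mem_singleton_iff]
  by_cases hac1 : a = c1 <;> by_cases hac2 : a = c2 <;>
  by_cases hbc1 : b = c1 <;> by_cases hbc2 : b = c2 <;>
  subst_vars <;> clear hdisj <;> aesop (config := { maxRuleApplications := 400, warnOnNonterminal := false }) <;> tauto

/-- Extranet, graph level: `(τ_{c2}(τ_{c1}(τ_{c2}(S)) − c1)) − c2` is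
the complete bipartite graph on `(P1 \ {c1}, P2 \ {c2})`. -/
theorem stmt_16 {V : Type u} (P1 P2 : Set V) (hdisj : Disjoint P1 P2)
    (c1 c2 : V) (hc1 : c1 ∈ P1) (hc2 : c2 ∈ P2) :
    delVert (localComp (delVert (localComp
        (localComp (binaryStar P1 P2 c1 c2) c2) c1) c1) c2) c2 =
      completeBipartiteOn (P1 \ {c1}) (P2 \ {c2}) := by
  rw [stepA P1 P2 hdisj c1 c2 hc1 hc2, stepB P1 P2 hdisj c1 c2 hc1 hc2,
    stepC P1 P2 hdisj c1 c2 hc1 hc2]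
end

section
/- Let P1 and P2 be disjoint sets of vertices with c1 ∈ P1 and c2 ∈ P2, let S = S(P1, P2, c1, c2) be the binary star graph, and let w ∈ P2 \ {c2}. Then τ_w(τ_{c1}(τ_w(S)) − c1) is the simple graph whose edges are exactly the pairs {c2, u} with u ∈ P1 \ {c1} together with the pairs {w, z} with z ∈ P2 \ {w}. -/
open SimpleGraph

universe u

lemma localComp_eq_of_unique_nbr {V : Type u} (G : SimpleGraph V) (i c : V)
    (h : ∀ x, G.Adj i x ↔ x = c) : localComp G i = G := by
  ext a b
  simp only [localComp, h]
  constructor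
  · rintro ⟨hab, ⟨⟨ha, hb⟩, -⟩ | ⟨-, h2⟩⟩
    · exact absurd (ha.trans hb.symm) hab
    · exact h2
  · intro h2
    exact ⟨h2.ne, Or.inr ⟨fun ⟨ha, hb⟩ => h2.ne (ha.trans hb.symm), h2⟩⟩

set_option maxHeartbeats 1000000 in
theorem stmt_18 {V : Type u} (P1 P2 : Set V) (hdisj : Disjoint P1 P2)
    (c1 c2 : V) (hc1 : c1 ∈ P1) (hc2 : c2 ∈ P2) (w : V) (hw : w ∈ P2 \ {c2}) :
    localComp (delVert (localComp (localComp (binaryStar P1 P2 c1 c2) w) c1) c1) w =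
      SimpleGraph.fromRel (fun a b =>
        (a = c2 ∧ b ∈ P1 \ {c1}) ∨ (a = w ∧ b ∈ P2 \ {w})) := by
  obtain ⟨hwP2, hwc2⟩ := hw
  have hwc2' : w ≠ c2 := hwc2
  have hc1P2 : c1 ∉ P2 := fun h => hdisj.ne_of_mem hc1 h rfl
  have hc2P1 : c2 ∉ P1 := fun h => hdisj.ne_of_mem h hc2 rfl
  have hwP1 : w ∉ P1 := fun h => hdisj.ne_of_mem h hwP2 rfl
  have hwc1 : w ≠ c1 := fun h => hc1P2 (h ▸ hwP2)
  have hc1c2 : c1 ≠ c2 := fun h => hc1P2 (h ▸ hc2)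
  set S := binaryStar P1 P2 c1 c2 with hSdef
  have hS : ∀ a b, S.Adj a b ↔ a ≠ b ∧
      ((a = c1 ∧ b ∈ P2) ∨ (b = c1 ∧ a ∈ P2) ∨ (a ∈ P1 ∧ b = c2) ∨ (b ∈ P1 ∧ a = c2)) := by
    intro a b
    simp only [hSdef, binaryStar, SimpleGraph.fromRel_adj]
    tauto
  -- Step 1: τ_w(S) = S
  have L1 : localComp S w = S := by
    apply localComp_eq_of_unique_nbr
    intro x
    rw [hS]
    constructor
    · rintro ⟨hne, h⟩
      rcases h with ⟨h1, -⟩ | ⟨h1, h2⟩ | ⟨h1, h2⟩ | ⟨h1, h2⟩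
      · exact absurd h1 hwc1
      · exact h1
      · exact absurd h1 hwP1
      · exact absurd h2 hwc2
    · rintro rfl
      exact ⟨hwc1, Or.inr (Or.inl ⟨rfl, hwP2⟩)⟩
  rw [L1]
  -- Step 2: τ_{c1}(S)
  have hNc1 : ∀ x, S.Adj c1 x ↔ x ∈ P2 := by
    intro x
    rw [hS]
    constructor
    · rintro ⟨hne, h⟩
      rcases h with ⟨-, h2⟩ | ⟨h1, -⟩ | ⟨-, h2⟩ | ⟨-, h2⟩
      · exact h2
      · exact absurd h1 (Ne.symm hne)
      · exact h2 ▸ hc2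
      · exact absurd h2 hc1c2
    · intro hx
      refine ⟨fun h => hc1P2 (h ▸ hx), Or.inl ⟨rfl, hx⟩⟩
  have hInP2 : ∀ a b, a ∈ P2 → b ∈ P2 → ¬ S.Adj a b := by
    intro a b ha hb h
    rw [hS] at h
    obtain ⟨-, h⟩ := h
    rcases h with ⟨h1, -⟩ | ⟨h1, -⟩ | ⟨h1, -⟩ | ⟨h1, -⟩
    · exact hc1P2 (h1 ▸ ha)
    · exact hc1P2 (h1 ▸ hb)
    · exact hdisj.ne_of_mem h1 ha rfl
    · exact hdisj.ne_of_mem h1 hb rfl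
  have hG2 : ∀ a b, (localComp S c1).Adj a b ↔
      a ≠ b ∧ ((a ∈ P2 ∧ b ∈ P2) ∨ S.Adj a b) := by
    intro a b
    have hI := hInP2 a b
    simp only [localComp, hNc1]
    tauto
  -- Step 3: delete c1
  have hG3 : ∀ a b, (delVert (localComp S c1) c1).Adj a b ↔
      a ≠ b ∧ a ≠ c1 ∧ b ≠ c1 ∧
        ((a ∈ P2 ∧ b ∈ P2) ∨ (a ∈ P1 ∧ b = c2) ∨ (b ∈ P1 ∧ a = c2)) := by
    intro a b
    simp only [delVert, hG2, hS]
    tauto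
  -- Step 4: local complement at w
  have hNw : ∀ x, (delVert (localComp S c1) c1).Adj w x ↔ x ∈ P2 ∧ w ≠ x := by
    intro x
    rw [hG3]
    have hx1 : x ∈ P2 → x ≠ c1 := fun hx h => hc1P2 (h ▸ hx)
    constructor
    · rintro ⟨hne, -, hxc1, h⟩
      rcases h with ⟨-, h2⟩ | ⟨h1, -⟩ | ⟨-, h2⟩
      · exact ⟨h2, hne⟩
      · exact absurd h1 hwP1
      · exact absurd h2 hwc2
    · rintro ⟨hx, hne⟩
      exact ⟨hne, hwc1, hx1 hx, Or.inl ⟨hwP2, hx⟩⟩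
  set G3 := delVert (localComp S c1) c1 with hG3def
  ext a b
  simp only [localComp, hNw, hG3, SimpleGraph.fromRel_adj, Set.mem_diff,
    Set.mem_singleton_iff]
  have ha2 : a = c2 → a ∈ P2 := fun h => h ▸ hc2
  have hb2 : b = c2 → b ∈ P2 := fun h => h ▸ hc2
  have haw : a = w → a ∈ P2 := fun h => h ▸ hwP2
  have hbw : b = w → b ∈ P2 := fun h => h ▸ hwP2
  have ha1 : a ∈ P2 → a ≠ c1 := fun hx h => hc1P2 (h ▸ hx)
  have hb1 : b ∈ P2 → b ≠ c1 := fun hx h => hc1P2 (h ▸ hx)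
  have haP : a ∈ P1 → a ∉ P2 := fun h1 h2 => hdisj.ne_of_mem h1 h2 rfl
  have hbP : b ∈ P1 → b ∉ P2 := fun h1 h2 => hdisj.ne_of_mem h1 h2 rfl
  have hac2w : a = c2 → a ≠ w := fun h1 h2 => hwc2 (h2 ▸ h1 ▸ rfl)
  have hbc2w : b = c2 → b ≠ w := fun h1 h2 => hwc2 (h2 ▸ h1 ▸ rfl)
  constructor
  · rintro ⟨hab, h⟩
    refine ⟨hab, ?_⟩
    rcases h with ⟨⟨⟨haP2, hwa⟩, ⟨hbP2, hwb⟩⟩, hn⟩ | ⟨hn, -, hac1, hbc1, hor⟩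
    · exact absurd ⟨hab, ha1 haP2, hb1 hbP2, Or.inl ⟨haP2, hbP2⟩⟩ hn
    · rcases hor with ⟨haP2, hbP2⟩ | ⟨haP1, hbc2⟩ | ⟨hbP1, hac2⟩
      · by_cases hwa : w = a
        · refine Or.inl (Or.inr ⟨hwa.symm, hbP2, fun h => hab (hwa.symm.trans h.symm)⟩)
        · have hwb : w = b := by
            by_contra hwb
            exact hn ⟨⟨haP2, hwa⟩, ⟨hbP2, hwb⟩⟩
          exact Or.inr (Or.inr ⟨hwb.symm, haP2, fun h => hab (h.trans hwb)⟩)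
      · exact Or.inr (Or.inl ⟨hbc2, haP1, hac1⟩)
      · exact Or.inl (Or.inl ⟨hac2, hbP1, hbc1⟩)
  · rintro ⟨hab, h⟩
    refine ⟨hab, ?_⟩
    rcases h with (⟨hac2, hbP1, hbc1⟩ | ⟨haw, hbP2, hbw⟩) | (⟨hbc2, haP1, hac1⟩ | ⟨hbw, haP2, haw⟩)
    · refine Or.inr ⟨fun hh => hbP hbP1 hh.2.1, hab,
        fun h => hc1c2 (h.symm.trans hac2), hbc1, Or.inr (Or.inr ⟨hbP1, hac2⟩)⟩
    · refine Or.inr ⟨fun hh => hh.1.2 haw.symm, hab, ha1 (haw ▸ hwP2),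
        hb1 hbP2, Or.inl ⟨haw ▸ hwP2, hbP2⟩⟩
    · refine Or.inr ⟨fun hh => haP haP1 hh.1.1, hab, hac1,
        fun h => hc1c2 (h.symm.trans hbc2), Or.inr (Or.inl ⟨haP1, hbc2⟩)⟩
    · refine Or.inr ⟨fun hh => hh.2.2 hbw.symm, hab, ha1 haP2,
        hb1 (hbw ▸ hwP2), Or.inl ⟨haP2, hbw ▸ hwP2⟩⟩
end
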